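/- A Banach space E has the Schur property if and only if E (with the norm topology) and E with the weak topology are sequentially homeomorphic, i.e., there exists a bijection T : E → E_w such that both T and T⁻¹ map convergent sequences to convergent sequences. -/

import Mathlib

open Filter

/-- A sequence converges weakly to a limit. -/
def WeaklyConvergentSeq {E : Type*} [NormedAddCommGroup E] [NormedSpace ℝ E]
    (x : ℕ → E) (l : E) : Prop :=
  ∀ φ : E →L[ℝ] ℝ, Tendsto (fun n => φ (x n)) atTop (nhds (φ l))

lemma weak_bounded {E : Type*} [NormedAddCommGroup E] [NormedSpace ℝ E]
    {x : ℕ → E} {l : E} (h : WeaklyConvergentSeq x l) : ∃ C, ∀ n, ‖x n‖ ≤ C := by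
  set g : ℕ → (E →L[ℝ] ℝ) →L[ℝ] ℝ := fun n => NormedSpace.inclusionInDoubleDual ℝ E (x n)
  have hb : ∀ φ : E →L[ℝ] ℝ, ∃ C, ∀ n, ‖g n φ‖ ≤ C := by
    intro φ
    have : Tendsto (fun n => ‖φ (x n)‖) atTop (nhds ‖φ l‖) := (h φ).norm
    obtain ⟨C, hC⟩ := this.bddAbove_range
    exact ⟨C, fun n => hC ⟨n, rfl⟩⟩
  obtain ⟨C, hC⟩ := banach_steinhaus hb
  refine ⟨C, fun n => ?_⟩
  have hiso := (NormedSpace.inclusionInDoubleDualLi (𝕜 := ℝ) (E := E)).norm_map (x n)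
  calc ‖x n‖ = ‖g n‖ := by rw [← hiso]; rfl
    _ ≤ C := hC n

theorem stmt_13 {E : Type*} [NormedAddCommGroup E] [NormedSpace ℝ E] [CompleteSpace E] :
    (∀ (x : ℕ → E) (l : E), WeaklyConvergentSeq x l → Tendsto x atTop (nhds l)) ↔
    ∃ T : E ≃ E,
      (∀ (x : ℕ → E) (l : E), Tendsto x atTop (nhds l) →
        WeaklyConvergentSeq (fun n => T (x n)) (T l)) ∧
      (∀ (x : ℕ → E) (l : E), WeaklyConvergentSeq x l →
        Tendsto (fun n => T.symm (x n)) atTop (nhds (T.symm l))) := by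
  constructor
  · intro hSchur
    refine ⟨Equiv.refl E, fun x l hx φ => ?_, fun x l hx => hSchur x l hx⟩
    exact (φ.continuous.tendsto l).comp hx
  · rintro ⟨T, hT1, hT2⟩ x l hx
    by_contra hcon
    rw [Metric.tendsto_atTop] at hcon
    push_neg at hcon
    obtain ⟨ε, hε, hfreq⟩ := hcon
    choose n hn hdist using hfreq
    have hntop : Tendsto n atTop atTop := tendsto_atTop_mono hn tendsto_id
    set u : ℕ → E := fun k => ‖x (n k) - l‖⁻¹ • (x (n k) - l) with hu
    have hnorm_pos : ∀ k, ε ≤ ‖x (n k) - l‖ := fun k => by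
      have := hdist k; rwa [dist_eq_norm] at this
    have hu_norm : ∀ k, ‖u k‖ = 1 := by
      intro k
      have h0 : ‖x (n k) - l‖ ≠ 0 := ne_of_gt (lt_of_lt_of_le hε (hnorm_pos k))
      simp [hu, norm_smul, abs_of_nonneg (inv_nonneg.2 (norm_nonneg _)),
        inv_mul_cancel₀ h0]
    have hu_weak : WeaklyConvergentSeq u 0 := by
      intro φ
      have h1 : Tendsto (fun k => φ (x (n k) - l)) atTop (nhds 0) := by
        have h2 : Tendsto (fun m => φ (x m) - φ l) atTop (nhds (φ l - φ l)) :=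
          (hx φ).sub tendsto_const_nhds
        simpa [map_sub, Function.comp_def] using h2.comp hntop
      have key : ∀ k, |φ (u k)| ≤ ε⁻¹ * |φ (x (n k) - l)| := by
        intro k
        have h2 : |φ (u k)| = ‖x (n k) - l‖⁻¹ * |φ (x (n k) - l)| := by
          simp [hu, map_smul, abs_mul, abs_of_nonneg (inv_nonneg.2 (norm_nonneg _))]
        rw [h2]
        exact mul_le_mul_of_nonneg_right
          (inv_anti₀ hε (hnorm_pos k)) (abs_nonneg _)
      have h3 : Tendsto (fun k => ε⁻¹ * |φ (x (n k) - l)|) atTop (nhds 0) := by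
        simpa using h1.abs.const_mul ε⁻¹
      have h4 : Tendsto (fun k => |φ (u k)|) atTop (nhds 0) :=
        squeeze_zero (fun k => abs_nonneg _) (fun k => by simpa using key k) h3
      rw [map_zero]
      exact (tendsto_zero_iff_abs_tendsto_zero _).2 h4
    set a : ℕ → ℕ → E := fun p m => u p + ((p : ℝ) + 1) • u m with ha
    have ha_weak : ∀ p, WeaklyConvergentSeq (a p) (u p) := by
      intro p φ
      have h4 := ((hu_weak φ).const_mul ((p : ℝ) + 1)).const_add (φ (u p))
      simpa [ha, map_add, map_smul, mul_comm] using h4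
    have hS : ∀ p, Tendsto (fun m => T.symm (a p m)) atTop (nhds (T.symm (u p))) :=
      fun p => hT2 (a p) (u p) (ha_weak p)
    have hSu : Tendsto (fun p => T.symm (u p)) atTop (nhds (T.symm 0)) :=
      hT2 u 0 hu_weak
    have hchoice : ∀ p : ℕ, ∃ m, dist (T.symm (a p m)) (T.symm (u p)) < 1 / (p + 1) := by
      intro p
      obtain ⟨N, hN⟩ := Metric.tendsto_atTop.1 (hS p) (1 / (p + 1)) (by positivity)
      exact ⟨N, hN N le_rfl⟩
    choose m hm using hchoice
    have hdiag : Tendsto (fun p => T.symm (a p (m p))) atTop (nhds (T.symm 0)) := by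
      rw [tendsto_iff_dist_tendsto_zero]
      have hbound : ∀ p, dist (T.symm (a p (m p))) (T.symm 0)
          ≤ 1 / (p + 1) + dist (T.symm (u p)) (T.symm 0) := fun p =>
        (dist_triangle _ (T.symm (u p)) _).trans (by
          have := (hm p).le
          gcongr)
      have hrhs : Tendsto (fun p : ℕ => 1 / ((p : ℝ) + 1) + dist (T.symm (u p)) (T.symm 0))
          atTop (nhds 0) := by
        have h5 : Tendsto (fun p : ℕ => 1 / ((p : ℝ) + 1)) atTop (nhds 0) :=
          tendsto_one_div_add_atTop_nhds_zero_nat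
        have h6 : Tendsto (fun p => dist (T.symm (u p)) (T.symm 0)) atTop (nhds 0) :=
          tendsto_iff_dist_tendsto_zero.1 hSu
        simpa using h5.add h6
      exact squeeze_zero (fun p => dist_nonneg) hbound hrhs
    -- transport back: the diagonal sequence is weakly convergent, hence bounded
    have hwd : WeaklyConvergentSeq (fun p => T (T.symm (a p (m p)))) (T (T.symm 0)) :=
      hT1 _ _ hdiag
    have hwd' : WeaklyConvergentSeq (fun p => a p (m p)) 0 := by
      simpa [Equiv.apply_symm_apply] using hwd
    obtain ⟨C, hC⟩ := weak_bounded hwd'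
    obtain ⟨p, hp⟩ := exists_nat_gt C
    have hlow : (p : ℝ) ≤ ‖a p (m p)‖ := by
      have h7 : ‖((p : ℝ) + 1) • u (m p)‖ = (p : ℝ) + 1 := by
        rw [norm_smul, hu_norm]
        simp [abs_of_nonneg (by positivity : (0:ℝ) ≤ (p:ℝ) + 1)]
      calc (p : ℝ) = ((p : ℝ) + 1) - 1 := by ring
        _ ≤ ‖((p : ℝ) + 1) • u (m p)‖ - ‖u p‖ := by rw [h7, hu_norm]
        _ ≤ ‖u p + ((p : ℝ) + 1) • u (m p)‖ := by
            have h8 := norm_sub_norm_le (((p : ℝ) + 1) • u (m p)) (-(u p))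
            rw [norm_neg, sub_neg_eq_add] at h8
            rw [add_comm (u p)]
            exact h8
        _ = ‖a p (m p)‖ := rfl
    linarith [hC p, hp.le, hlow]
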